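/- Let T : ℝ^D → ℝ^D be a diffeomorphism equivariant with respect to a group G of orthogonal representations, and let p_u be a density invariant with respect to G. Then the pushforward density p_x(x) = p_u(T⁻¹(x))·|det J_{T⁻¹}(x)| is invariant with respect to G: p_x(R_g x) = p_x(x) for all g ∈ G, x ∈ ℝ^D. -/

import Mathlib

open Matrix

/-- If `T` is a diffeomorphism of `ℝ^D` (with differentiable inverse `S`) that is
equivariant with respect to a group `G` represented by matrices of determinant of
absolute value 1, and the base density `p_u` is `G`-invariant, then the pushforward
density `p_x x = p_u (S x) * |det J_S x|` is `G`-invariant. -/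
theorem pushforward_density_invariant {D : ℕ} {G : Type*} [Group G]
    (R : G → Matrix (Fin D) (Fin D) ℝ)
    (hRunit : ∀ g, IsUnit (R g).det)
    (hRdet : ∀ g, |(R g).det| = 1)
    (T S : (Fin D → ℝ) → (Fin D → ℝ))
    (hTS : Function.LeftInverse S T) (hST : Function.RightInverse S T)
    (hT : Differentiable ℝ T) (hS : Differentiable ℝ S)
    (hequiv : ∀ g u, T (R g *ᵥ u) = R g *ᵥ T u)
    (pu : (Fin D → ℝ) → ℝ) (hpu : ∀ g u, pu (R g *ᵥ u) = pu u)
    (px : (Fin D → ℝ) → ℝ)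
    (hpx : ∀ x, px x = pu (S x) * |(fderiv ℝ S x).det|) :
    ∀ g x, px (R g *ᵥ x) = px x := by
  -- S is also equivariant
  have hSequiv : ∀ g x, S (R g *ᵥ x) = R g *ᵥ S x := by
    intro g x
    have h := hequiv g (S x)
    rw [hST x] at h
    rw [← h, hTS]
  intro g x
  -- the linear map of multiplication by R g
  set Lg : (Fin D → ℝ) →L[ℝ] (Fin D → ℝ) :=
    LinearMap.toContinuousLinearMap (Matrix.mulVecLin (R g)) with hLg
  have hLgapp : ∀ y, Lg y = R g *ᵥ y := fun y => rfl
  have hdetLg : (Lg : (Fin D → ℝ) →ₗ[ℝ] (Fin D → ℝ)).det = (R g).det := by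
    rw [hLg, LinearMap.coe_toContinuousLinearMap, ← Matrix.toLin'_apply', LinearMap.det_toLin']
  -- derivative comparison via chain rule on both sides of equivariance
  have h1 : HasFDerivAt (fun y => S (R g *ᵥ y))
      (((fderiv ℝ S (R g *ᵥ x)).comp Lg)) x := by
    have := (hS (R g *ᵥ x)).hasFDerivAt.comp x (Lg.hasFDerivAt (x := x))
    exact this
  have h2 : HasFDerivAt (fun y => R g *ᵥ S y)
      ((Lg.comp (fderiv ℝ S x))) x := by
    have := (Lg.hasFDerivAt (x := S x)).comp x (hS x).hasFDerivAt
    exact this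
  have heq : (fderiv ℝ S (R g *ᵥ x)).comp Lg = Lg.comp (fderiv ℝ S x) := by
    have h1' : HasFDerivAt (fun y => S (R g *ᵥ y)) (Lg.comp (fderiv ℝ S x)) x := by
      apply h2.congr_of_eventuallyEq
      filter_upwards with y using hSequiv g y
    exact h1.unique h1'
  -- take determinants
  have hdet : (fderiv ℝ S (R g *ᵥ x)).det = (fderiv ℝ S x).det := by
    have hd := congrArg ContinuousLinearMap.det heq
    rw [ContinuousLinearMap.det, ContinuousLinearMap.det,
      ContinuousLinearMap.toLinearMap_comp, ContinuousLinearMap.toLinearMap_comp,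
      LinearMap.det_comp, LinearMap.det_comp, hdetLg] at hd
    have hu := hRunit g
    rw [ContinuousLinearMap.det, ContinuousLinearMap.det]
    rw [mul_comm] at hd
    exact mul_left_cancel₀ hu.ne_zero hd
  rw [hpx, hpx, hSequiv g x, hpu, hdet]
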